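/- For any games G, H: if H > 0 then G → H > 0; if H < 0 then G → H < 0; if H = 0 then G → H has the same outcome class as G; and if H is incomparable with 0 (first-player win), then G → H has the same outcome class as G → ∗. -/

import Mathlib

namespace SetTheory

universe u

/-- Pregames, as in Mathlib of December 2024 (since removed from Mathlib). -/
inductive PGame : Type (u + 1)
  | mk : ∀ α β : Type u, (α → PGame) → (β → PGame) → PGame

namespace PGame

def LeftMoves : PGame.{u} → Type u
  | mk l _ _ _ => l

def RightMoves : PGame.{u} → Type u
  | mk _ r _ _ => r

def moveLeft : ∀ g : PGame.{u}, LeftMoves g → PGame.{u}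
  | mk _ _ L _ => L

def moveRight : ∀ g : PGame.{u}, RightMoves g → PGame.{u}
  | mk _ _ _ R => R

instance : Zero PGame.{u} :=
  ⟨mk PEmpty PEmpty PEmpty.elim PEmpty.elim⟩

def star : PGame.{u} :=
  mk PUnit PUnit (fun _ => 0) fun _ => 0

def neg : PGame.{u} → PGame.{u}
  | mk l r L R => mk r l (fun i => neg (R i)) fun i => neg (L i)

instance : Neg PGame.{u} :=
  ⟨neg⟩

/-- Auxiliary for `add`: recursion on the second game, given the sums for the first game's options. -/
def addAux (xl xr : Type u) (xL : xl → PGame.{u}) (xR : xr → PGame.{u})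
    (IHl : xl → PGame.{u} → PGame.{u}) (IHr : xr → PGame.{u} → PGame.{u}) :
    PGame.{u} → PGame.{u}
  | mk yl yr yL yR =>
    mk (xl ⊕ yl) (xr ⊕ yr) (Sum.elim (fun i => IHl i (mk yl yr yL yR)) fun j => addAux xl xr xL xR IHl IHr (yL j))
      (Sum.elim (fun i => IHr i (mk yl yr yL yR)) fun j => addAux xl xr xL xR IHl IHr (yR j))

/-- Disjunctive sum: left options `xL + y` and `x + yL`, right options `xR + y` and `x + yR`. -/
def add : PGame.{u} → PGame.{u} → PGame.{u}
  | mk xl xr xL xR, y => addAux xl xr xL xR (fun i z => add (xL i) z) (fun i z => add (xR i) z) y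

instance : Add PGame.{u} :=
  ⟨add⟩

instance : Sub PGame.{u} :=
  ⟨fun x y => x + -y⟩

/-- `(leLF x y).1` is `x ≤ y`, `(leLF x y).2` is `x ⧏ y` (i.e. `¬ y ≤ x`). -/
noncomputable def leLF (x : PGame.{u}) : PGame.{u} → Prop × Prop :=
  PGame.rec (motive := fun _ => PGame.{u} → Prop × Prop)
    (fun _ _ _ _ IHxl IHxr y =>
      PGame.rec (motive := fun _ => Prop × Prop)
        (fun yl yr yL yR IHyl IHyr =>
          ((∀ i, (IHxl i (mk yl yr yL yR)).2) ∧ ∀ j, (IHyr j).2,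
            (∃ i, (IHyl i).1) ∨ ∃ j, (IHxr j (mk yl yr yL yR)).1)) y) x

instance : LE PGame.{u} :=
  ⟨fun x y => (leLF x y).1⟩

instance : LT PGame.{u} :=
  ⟨fun x y => x ≤ y ∧ ¬y ≤ x⟩

instance : HasEquiv PGame.{u} :=
  ⟨fun x y => x ≤ y ∧ y ≤ x⟩

def Fuzzy (x y : PGame.{u}) : Prop :=
  ¬x ≤ y ∧ ¬y ≤ x

/-- A short pregame: finitely many options, all of them short. -/
class inductive Short : PGame.{u} → Type (u + 1)
  | mk : ∀ {α β : Type u} {L : α → PGame.{u}} {R : β → PGame.{u}} (_ : ∀ i : α, Short (L i))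
      (_ : ∀ j : β, Short (R j)) [Fintype α] [Fintype β], Short (mk α β L R)

end PGame

end SetTheory

open SetTheory

open scoped PGame

namespace SeqCompound

open Classical in
/-- The sequential compound `G → H` of two pregames. -/
noncomputable def seqc : PGame → PGame → PGame
  | PGame.mk α β L R, H =>
    if Nonempty α then
      if Nonempty β then
        PGame.mk α β (fun a => seqc (L a) H) (fun b => seqc (R b) H)
      else
        PGame.mk α H.RightMoves (fun a => seqc (L a) H) H.moveRight
    else
      if Nonempty β then
        PGame.mk H.LeftMoves β H.moveLeft (fun b => seqc (R b) H)
      else H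

/-- A pregame is dicotic (all-small) if in every subposition,
Left has an option iff Right has an option. -/
def Dicotic : PGame → Prop
  | PGame.mk α β L R =>
    (Nonempty α ↔ Nonempty β) ∧ (∀ a, Dicotic (L a)) ∧ (∀ b, Dicotic (R b))

/-- The canonical nonnegative integer game `{n-1 | }`. -/
def intGame : ℕ → PGame
  | 0 => 0
  | n + 1 => PGame.mk PUnit PEmpty (fun _ => intGame n) PEmpty.elim

/-- `upSum k` is the disjunctive sum `↑¹ + ↑² + ⋯ + ↑ᵏ`. -/
def upSum : ℕ → PGame
  | 0 => 0
  | k + 1 => upSum k +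
      PGame.mk PUnit PUnit (fun _ => 0) (fun _ => PGame.star - upSum k)

/-- `upPow k` is the game `↑^(k+1) = {0 | ∗ - (↑¹ + ⋯ + ↑ᵏ)}`. -/
def upPow (k : ℕ) : PGame :=
  PGame.mk PUnit PUnit (fun _ => 0) (fun _ => PGame.star - upSum k)

/-- Sequential compound of a list of games. -/
noncomputable def seqList : List PGame → PGame
  | [] => 0
  | G :: l => seqc G (seqList l)

end SeqCompound

namespace SetTheory

namespace PGame

def LF (x y : PGame.{u}) : Prop := ¬y ≤ x

infix:50 " ⧏ " => SetTheory.PGame.LF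

theorem leLF_mk {xl xr : Type u} (xL : xl → PGame.{u}) (xR : xr → PGame.{u})
    {yl yr : Type u} (yL : yl → PGame.{u}) (yR : yr → PGame.{u}) :
    leLF (mk xl xr xL xR) (mk yl yr yL yR) =
      ((∀ i, (leLF (xL i) (mk yl yr yL yR)).2) ∧ ∀ j, (leLF (mk xl xr xL xR) (yR j)).2,
        (∃ i, (leLF (mk xl xr xL xR) (yL i)).1) ∨ ∃ j, (leLF (xR j) (mk yl yr yL yR)).1) := rfl

theorem lf_iff_aux (x : PGame.{u}) : ∀ y : PGame.{u},
    ((leLF x y).2 ↔ ¬(leLF y x).1) ∧ ((leLF y x).2 ↔ ¬(leLF x y).1) := by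
  induction x with
  | mk xl xr xL xR ihx ihx' =>
    intro y
    induction y with
    | mk yl yr yL yR ihy ihy' =>
      simp only [leLF_mk, not_and_or, not_forall]
      constructor
      · exact or_congr (exists_congr fun i => ((ihy i).2.not.trans not_not).symm)
          (exists_congr fun j => ((ihx' j _).2.not.trans not_not).symm)
      · exact or_congr (exists_congr fun i => ((ihx i _).1.not.trans not_not).symm)
          (exists_congr fun j => ((ihy' j).1.not.trans not_not).symm)

theorem not_le {x y : PGame.{u}} : ¬x ≤ y ↔ y ⧏ x := Iff.rfl

theorem lt_of_le_of_lf {x y : PGame.{u}} (h1 : x ≤ y) (h2 : x ⧏ y) : x < y := And.intro h1 h2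

theorem snd_of_le_moveLeft {x : PGame.{u}} {yl yr : Type u} {yL : yl → PGame.{u}}
    {yR : yr → PGame.{u}} (i : yl) (h : (leLF x (yL i)).1) : (leLF x (mk yl yr yL yR)).2 := by
  cases x with
  | mk xl xr xL xR =>
    rw [leLF_mk]
    exact Or.inl ⟨i, h⟩

theorem snd_of_moveRight_le {xl xr : Type u} {xL : xl → PGame.{u}} {xR : xr → PGame.{u}}
    {y : PGame.{u}} (j : xr) (h : (leLF (xR j) y).1) : (leLF (mk xl xr xL xR) y).2 := by
  cases y with
  | mk yl yr yL yR =>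
    rw [leLF_mk]
    exact Or.inr ⟨j, h⟩

theorem le_rfl' : ∀ x : PGame.{u}, x ≤ x
  | mk xl xr xL xR => by
    show (leLF (mk xl xr xL xR) (mk xl xr xL xR)).1
    rw [leLF_mk]
    exact ⟨fun i => snd_of_le_moveLeft i (le_rfl' (xL i)),
      fun j => snd_of_moveRight_le j (le_rfl' (xR j))⟩

theorem lf_irrefl (x : PGame.{u}) : ¬x ⧏ x := fun h => h (le_rfl' x)

theorem zero_le_lf {x : PGame.{u}} : 0 ≤ x ↔ ∀ j, 0 ⧏ x.moveRight j := by
  cases x with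
  | mk xl xr xL xR =>
    have e : (0 ≤ mk xl xr xL xR) ↔
        (∀ i : PEmpty.{u+1}, (leLF (PEmpty.elim i : PGame.{u}) (mk xl xr xL xR)).2) ∧
          ∀ j, (leLF 0 (xR j)).2 := Iff.rfl
    rw [e]
    exact ⟨fun h j => (lf_iff_aux 0 (xR j)).1.1 (h.2 j),
      fun h => ⟨fun i => i.elim, fun j => (lf_iff_aux 0 (xR j)).1.2 (h j)⟩⟩

theorem le_zero_lf {x : PGame.{u}} : x ≤ 0 ↔ ∀ i, x.moveLeft i ⧏ 0 := by
  cases x with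
  | mk xl xr xL xR =>
    have e : (mk xl xr xL xR ≤ 0) ↔
        (∀ i, (leLF (xL i) 0).2) ∧
          ∀ j : PEmpty.{u+1}, (leLF (mk xl xr xL xR) (PEmpty.elim j : PGame.{u})).2 := Iff.rfl
    rw [e]
    exact ⟨fun h i => (lf_iff_aux (xL i) 0).1.1 (h.1 i),
      fun h => ⟨fun i => (lf_iff_aux (xL i) 0).1.2 (h i), fun j => j.elim⟩⟩

theorem zero_lf_le {x : PGame.{u}} : 0 ⧏ x ↔ ∃ i, 0 ≤ x.moveLeft i := by
  cases x with
  | mk xl xr xL xR =>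
    have e1 : 0 ⧏ mk xl xr xL xR ↔ (leLF 0 (mk xl xr xL xR)).2 :=
      (lf_iff_aux 0 (mk xl xr xL xR)).1.symm
    have e2 : (leLF 0 (mk xl xr xL xR)).2 ↔ (∃ i, (leLF 0 (xL i)).1) ∨
        ∃ j : PEmpty.{u+1}, (leLF (PEmpty.elim j : PGame.{u}) (mk xl xr xL xR)).1 := Iff.rfl
    rw [e1, e2]
    exact ⟨fun h => h.elim (fun h => h) (fun ⟨j, _⟩ => j.elim), fun h => Or.inl h⟩

theorem lf_zero_le {x : PGame.{u}} : x ⧏ 0 ↔ ∃ j, x.moveRight j ≤ 0 := by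
  cases x with
  | mk xl xr xL xR =>
    have e1 : mk xl xr xL xR ⧏ 0 ↔ (leLF (mk xl xr xL xR) 0).2 :=
      (lf_iff_aux (mk xl xr xL xR) 0).1.symm
    have e2 : (leLF (mk xl xr xL xR) 0).2 ↔
        (∃ i : PEmpty.{u+1}, (leLF (mk xl xr xL xR) (PEmpty.elim i : PGame.{u})).1) ∨
          ∃ j, (leLF (xR j) 0).1 := Iff.rfl
    rw [e1, e2]
    exact ⟨fun h => h.elim (fun ⟨i, _⟩ => i.elim) (fun h => h), fun h => Or.inr h⟩

theorem star_lf_zero : star.{u} ⧏ 0 := fun h => lf_irrefl 0 (zero_le_lf.1 h PUnit.unit)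

theorem zero_lf_star : 0 ⧏ star.{u} := fun h => lf_irrefl 0 (le_zero_lf.1 h PUnit.unit)

end PGame

end SetTheory

namespace SeqCompound

open PGame

open Classical in
lemma seqc_mk (α β : Type u) (L : α → PGame) (R : β → PGame) (H : PGame) :
    seqc (PGame.mk α β L R) H =
      if Nonempty α then
        if Nonempty β then
          PGame.mk α β (fun a => seqc (L a) H) (fun b => seqc (R b) H)
        else
          PGame.mk α H.RightMoves (fun a => seqc (L a) H) H.moveRight
      else
        if Nonempty β then
          PGame.mk H.LeftMoves β H.moveLeft (fun b => seqc (R b) H)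
        else H := by
  rw [seqc]

lemma seqc_outcome_aux (H : PGame) : ∀ G : PGame,
    (0 < H → (0 ≤ seqc G H ∧ 0 ⧏ seqc G H)) ∧
    (H < 0 → (seqc G H ≤ 0 ∧ seqc G H ⧏ 0)) ∧
    ((H ≈ 0) → ((0 ≤ seqc G H ↔ 0 ≤ G) ∧ (seqc G H ≤ 0 ↔ G ≤ 0))) ∧
    (PGame.Fuzzy H 0 →
      ((0 ≤ seqc G H ↔ 0 ≤ seqc G PGame.star) ∧
        (seqc G H ≤ 0 ↔ seqc G PGame.star ≤ 0))) := by
  intro G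
  induction G with
  | mk α β L R ihL ihR =>
    rw [seqc_mk (H := H), seqc_mk (H := PGame.star)]
    by_cases hα : Nonempty α <;> by_cases hβ : Nonempty β
    · -- both nonempty
      rw [if_pos hα, if_pos hβ, if_pos hα, if_pos hβ]
      refine ⟨fun h => ⟨?_, ?_⟩, fun h => ⟨?_, ?_⟩, fun h => ⟨?_, ?_⟩, fun h => ⟨?_, ?_⟩⟩
      · exact zero_le_lf.2 fun b => ((ihR b).1 h).2
      · exact zero_lf_le.2 ⟨hα.some, ((ihL hα.some).1 h).1⟩
      · exact le_zero_lf.2 fun a => ((ihL a).2.1 h).2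
      · exact lf_zero_le.2 ⟨hβ.some, ((ihR hβ.some).2.1 h).1⟩
      · rw [zero_le_lf, zero_le_lf]
        refine forall_congr' fun b => ?_
        rw [← PGame.not_le, ← PGame.not_le]
        exact not_congr ((ihR b).2.2.1 h).2
      · rw [le_zero_lf, le_zero_lf]
        refine forall_congr' fun a => ?_
        rw [← PGame.not_le, ← PGame.not_le]
        exact not_congr ((ihL a).2.2.1 h).1
      · rw [zero_le_lf, zero_le_lf]
        refine forall_congr' fun b => ?_
        rw [← PGame.not_le, ← PGame.not_le]
        exact not_congr ((ihR b).2.2.2 h).2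
      · rw [le_zero_lf, le_zero_lf]
        refine forall_congr' fun a => ?_
        rw [← PGame.not_le, ← PGame.not_le]
        exact not_congr ((ihL a).2.2.2 h).1
    · -- α nonempty, β empty
      rw [if_pos hα, if_neg hβ, if_pos hα, if_neg hβ]
      refine ⟨fun h => ⟨?_, ?_⟩, fun h => ⟨?_, ?_⟩, fun h => ⟨?_, ?_⟩, fun h => ⟨?_, ?_⟩⟩
      · exact zero_le_lf.2 fun j => zero_le_lf.1 h.1 j
      · exact zero_lf_le.2 ⟨hα.some, ((ihL hα.some).1 h).1⟩
      · exact le_zero_lf.2 fun a => ((ihL a).2.1 h).2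
      · exact lf_zero_le.2 ((lf_zero_le (x := H)).1 h.2)
      · exact iff_of_true (zero_le_lf.2 fun j => zero_le_lf.1 h.2 j)
          (zero_le_lf.2 fun b => (hβ ⟨b⟩).elim)
      · rw [le_zero_lf, le_zero_lf]
        refine forall_congr' fun a => ?_
        rw [← PGame.not_le, ← PGame.not_le]
        exact not_congr ((ihL a).2.2.1 h).1
      · refine iff_of_false (fun hle => ?_) (fun hle => ?_)
        · exact (PGame.not_le.2 h.2) (zero_le_lf.2 fun j => zero_le_lf.1 hle j)
        · exact lf_irrefl 0 (zero_le_lf.1 hle PUnit.unit)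
      · rw [le_zero_lf, le_zero_lf]
        refine forall_congr' fun a => ?_
        rw [← PGame.not_le, ← PGame.not_le]
        exact not_congr ((ihL a).2.2.2 h).1
    · -- α empty, β nonempty
      rw [if_neg hα, if_pos hβ, if_neg hα, if_pos hβ]
      refine ⟨fun h => ⟨?_, ?_⟩, fun h => ⟨?_, ?_⟩, fun h => ⟨?_, ?_⟩, fun h => ⟨?_, ?_⟩⟩
      · exact zero_le_lf.2 fun b => ((ihR b).1 h).2
      · exact zero_lf_le.2 ((zero_lf_le (x := H)).1 h.2)
      · exact le_zero_lf.2 fun i => le_zero_lf.1 h.1 i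
      · exact lf_zero_le.2 ⟨hβ.some, ((ihR hβ.some).2.1 h).1⟩
      · rw [zero_le_lf, zero_le_lf]
        refine forall_congr' fun b => ?_
        rw [← PGame.not_le, ← PGame.not_le]
        exact not_congr ((ihR b).2.2.1 h).2
      · exact iff_of_true (le_zero_lf.2 fun i => le_zero_lf.1 h.1 i)
          (le_zero_lf.2 fun a => (hα ⟨a⟩).elim)
      · rw [zero_le_lf, zero_le_lf]
        refine forall_congr' fun b => ?_
        rw [← PGame.not_le, ← PGame.not_le]
        exact not_congr ((ihR b).2.2.2 h).2
      · refine iff_of_false (fun hle => ?_) (fun hle => ?_)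
        · exact (PGame.not_le.2 h.1) (le_zero_lf.2 fun i => le_zero_lf.1 hle i)
        · exact lf_irrefl 0 (le_zero_lf.1 hle PUnit.unit)
    · -- both empty
      rw [if_neg hα, if_neg hβ, if_neg hα, if_neg hβ]
      refine ⟨fun h => ⟨h.1, h.2⟩, fun h => ⟨h.1, h.2⟩, fun h => ⟨?_, ?_⟩,
        fun h => ⟨?_, ?_⟩⟩
      · exact iff_of_true h.2 (zero_le_lf.2 fun b => (hβ ⟨b⟩).elim)
      · exact iff_of_true h.1 (le_zero_lf.2 fun a => (hα ⟨a⟩).elim)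
      · exact iff_of_false (PGame.not_le.2 h.2) (PGame.not_le.2 star_lf_zero)
      · exact iff_of_false (PGame.not_le.2 h.1) (PGame.not_le.2 zero_lf_star)

end SeqCompound


open SeqCompound in
/-- Stromquist–Ullman: outcomes of sequential compounds.
If `H > 0` then `G → H > 0`; if `H < 0` then `G → H < 0`; if `H = 0` then `G → H`
has the same outcome as `G`; if `H ∥ 0` then `G → H` has the same outcome as `G → ∗`. -/
theorem seqc_outcome (G H : PGame) [PGame.Short G] [PGame.Short H] :
    (0 < H → 0 < seqc G H) ∧
    (H < 0 → seqc G H < 0) ∧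
    ((H ≈ 0) → ((0 ≤ seqc G H ↔ 0 ≤ G) ∧ (seqc G H ≤ 0 ↔ G ≤ 0))) ∧
    (PGame.Fuzzy H 0 →
      ((0 ≤ seqc G H ↔ 0 ≤ seqc G PGame.star) ∧
        (seqc G H ≤ 0 ↔ seqc G PGame.star ≤ 0))) := by
  obtain ⟨h1, h2, h3, h4⟩ := seqc_outcome_aux H G
  exact ⟨fun h => PGame.lt_of_le_of_lf (h1 h).1 (h1 h).2,
    fun h => PGame.lt_of_le_of_lf (h2 h).1 (h2 h).2, h3, h4⟩
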